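/- Let v_1, …, v_m ∈ ℝ^p (m ≥ 1) and suppose that there do NOT exist real coefficients c_1, …, c_m with c_k ≥ 1 for all k and ∑_{k=1}^m c_k v_k = 0. Then there exists a nonzero β ∈ ℝ^p with ⟨v_k, β⟩ ≥ 0 for all k = 1, …, m. (Separating-hyperplane direction of the abstract duality underlying Theorem 2; no spanning hypothesis is needed.) -/

import Mathlib

open scoped BigOperators RealInnerProductSpace

noncomputable section

/-- Real value of a binary indicator. -/
def bval (b : Bool) : ℝ := if b then 1 else 0

/-- The alternative set `B_i = {d ∈ {0,1}^T : ∑_t d_t = ∑_t Y_{it}}`. -/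
def altSet (T : ℕ) (Yi : Fin T → Bool) : Finset (Fin T → Bool) :=
  Finset.univ.filter fun d => (∑ t, (d t).toNat) = ∑ t, (Yi t).toNat

/-- The conditional log-likelihood `log L(β)`. -/
def logL {n T p : ℕ} (X : Fin n → Fin T → EuclideanSpace ℝ (Fin p))
    (Y : Fin n → Fin T → Bool) (β : EuclideanSpace ℝ (Fin p)) : ℝ :=
  ∑ i, ((∑ t, bval (Y i t) * ⟪X i t, β⟫) -
    Real.log (∑ d ∈ altSet T (Y i), Real.exp (∑ t, bval (d t) * ⟪X i t, β⟫)))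

/-- The conditional-logit (softmax) weights `w_i(d; β)`. -/
def cweight {n T p : ℕ} (X : Fin n → Fin T → EuclideanSpace ℝ (Fin p))
    (Y : Fin n → Fin T → Bool) (i : Fin n) (d : Fin T → Bool)
    (β : EuclideanSpace ℝ (Fin p)) : ℝ :=
  Real.exp (∑ t, bval (d t) * ⟪X i t, β⟫) /
    ∑ f ∈ altSet T (Y i), Real.exp (∑ t, bval (f t) * ⟪X i t, β⟫)

/-- Row index set of the matrix in Assumption 1: pairs `(i, d)` with `d ∈ B_i`. -/
abbrev RowIdx (n T : ℕ) (Y : Fin n → Fin T → Bool) :=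
  (i : Fin n) × {d : Fin T → Bool // d ∈ altSet T (Y i)}

/-- The matrix of Assumption 1, evaluated at `β`. -/
def rowMat {n T p : ℕ} (X : Fin n → Fin T → EuclideanSpace ℝ (Fin p))
    (Y : Fin n → Fin T → Bool) (β : EuclideanSpace ℝ (Fin p)) :
    Matrix (RowIdx n T Y) (Fin p) ℝ :=
  fun r k =>
    (∑ t, bval (r.2.1 t) * X r.1 t k) -
      ∑ e ∈ altSet T (Y r.1),
        cweight X Y r.1 e β * ∑ t, bval (e t) * X r.1 t k

/-- Assumption 1 (full rank). -/
def Assumption1 {n T p : ℕ} (X : Fin n → Fin T → EuclideanSpace ℝ (Fin p))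
    (Y : Fin n → Fin T → Bool) : Prop :=
  ∀ β : EuclideanSpace ℝ (Fin p), (rowMat X Y β).rank = p

/-- Assumption 2 (no separation). -/
def Assumption2 {n T p : ℕ} (X : Fin n → Fin T → EuclideanSpace ℝ (Fin p))
    (Y : Fin n → Fin T → Bool) : Prop :=
  ¬ ∃ βstar : EuclideanSpace ℝ (Fin p), βstar ≠ 0 ∧
      ∀ i, ∀ d ∈ altSet T (Y i),
        0 ≤ ∑ t, (bval (d t) - bval (Y i t)) * ⟪X i t, βstar⟫

/-- The vectors `v_{i,d} = ∑_t (d_t − Y_{it}) X_{it}`. -/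
def vvec {n T p : ℕ} (X : Fin n → Fin T → EuclideanSpace ℝ (Fin p))
    (Y : Fin n → Fin T → Bool) (i : Fin n) (d : Fin T → Bool) :
    EuclideanSpace ℝ (Fin p) :=
  ∑ t, (bval (d t) - bval (Y i t)) • X i t


lemma aux_sep (m : ℕ) :
    ∀ (E : Type) [NormedAddCommGroup E] [InnerProductSpace ℝ E] [FiniteDimensional ℝ E]
      (v : Fin m → E),
      (¬ ∃ c : Fin m → ℝ, (∀ k, 1 ≤ c k) ∧ ∑ k, c k • v k = 0) →
      ∃ β : E, β ≠ 0 ∧ ∀ k, 0 ≤ ⟪v k, β⟫ := by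
  induction m using Nat.strong_induction_on with
  | _ m ih =>
  intro E _ _ _ v h
  rcases Nat.eq_zero_or_pos m with rfl | hm
  · exact absurd ⟨fun _ => 1, fun k => k.elim0, by simp⟩ h
  by_cases h0 : (0 : E) ∈ convexHull ℝ (Set.range v)
  · rw [convexHull_range_eq_exists_affineCombination] at h0
    obtain ⟨s, w, hw0, hw1, hws⟩ := h0
    rw [Finset.affineCombination_eq_linear_combination s v w hw1] at hws
    set S : Finset (Fin m) := s.filter fun k => w k ≠ 0 with hSdef
    have hwpos : ∀ k ∈ S, 0 < w k := by
      intro k hk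
      rw [hSdef, Finset.mem_filter] at hk
      exact lt_of_le_of_ne (hw0 k hk.1) (Ne.symm hk.2)
    have hSsum : ∑ k ∈ S, w k • v k = 0 := by
      have heq := Finset.sum_filter_of_ne (s := s) (f := fun k => w k • v k)
        (p := fun k => w k ≠ 0) (fun x _ hfx hwx => hfx (by show w x • v x = 0; rw [hwx, zero_smul]))
      rw [hSdef, heq]
      exact hws
    have hex : ∃ k ∈ s, w k ≠ 0 := by
      by_contra hc
      push_neg at hc
      rw [Finset.sum_eq_zero hc] at hw1
      exact one_ne_zero hw1.symm
    obtain ⟨k₀, hk₀s, hk₀w⟩ := hex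
    have hk₀S : k₀ ∈ S := Finset.mem_filter.2 ⟨hk₀s, hk₀w⟩
    set T : Finset (Fin m) := Finset.univ.filter (fun k => k ∉ S) with hTdef
    have hmemT : ∀ k, k ∈ T ↔ k ∉ S := by
      intro k; rw [hTdef, Finset.mem_filter]; simp
    have hk₀T : k₀ ∉ T := by rw [hmemT]; simp [hk₀S]
    have hTcard : T.card < m := by
      have hss : T ⊂ Finset.univ :=
        (Finset.ssubset_iff_of_subset (Finset.subset_univ T)).2
          ⟨k₀, Finset.mem_univ _, hk₀T⟩
      simpa using Finset.card_lt_card hss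
    set V : Submodule ℝ E := Submodule.span ℝ (v '' ↑S) with hVdef
    set W : Submodule ℝ E := Vᗮ with hWdef
    set e : ↥T ≃ Fin (Fintype.card ↥T) := Fintype.equivFin ↥T with hedef
    set m' : ℕ := Fintype.card ↥T with hm'def
    have hm'lt : m' < m := by rw [hm'def, Fintype.card_coe]; exact hTcard
    set v' : Fin m' → ↥W := fun j => Submodule.orthogonalProjectionOnto W (v ↑(e.symm j)) with hv'def
    have h' : ¬ ∃ c' : Fin m' → ℝ, (∀ j, 1 ≤ c' j) ∧ ∑ j, c' j • v' j = 0 := by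
      rintro ⟨c', hc'1, hc's⟩
      apply h
      set u : E := ∑ j, c' j • v ↑(e.symm j) with hu
      have hproj : (Submodule.orthogonalProjectionOnto W u : ↥W) = 0 := by
        rw [hu, map_sum]
        simp_rw [map_smul]
        exact hc's
      have humem : u ∈ V := by
        have h1 : u - (Submodule.orthogonalProjectionOnto W u : E) ∈ Wᗮ :=
          by exact W.sub_starProjection_mem_orthogonal u
        rw [hproj] at h1
        simp only [ZeroMemClass.coe_zero, sub_zero] at h1
        rwa [hWdef, Submodule.orthogonal_orthogonal] at h1
      have hrange : Set.range (fun k : ↥S => v ↑k) = v '' ↑S := by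
        ext x; simp [Set.mem_image]
      have hex2 : ∃ a : ↥S → ℝ, ∑ k, a k • v ↑k = u := by
        rw [← Submodule.mem_span_range_iff_exists_fun, hrange]
        exact humem
      obtain ⟨a, ha⟩ := hex2
      set a' : Fin m → ℝ := fun k => if hk : k ∈ S then a ⟨k, hk⟩ else 0 with ha'def
      set t : ℝ := ∑ k ∈ S, (1 + |a' k|) / w k with ht
      set c : Fin m → ℝ := fun k => if hk : k ∈ T then c' (e ⟨k, hk⟩) else t * w k - a' k
        with hcdef
      refine ⟨c, ?_, ?_⟩
      · intro k
        by_cases hk : k ∈ T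
        · simp only [hcdef, dif_pos hk]; exact hc'1 _
        · simp only [hcdef, dif_neg hk]
          have hkS : k ∈ S := by
            by_contra hkS
            exact hk ((hmemT k).2 hkS)
          have hwk := hwpos k hkS
          have h1 : (1 + |a' k|) / w k ≤ t :=
            Finset.single_le_sum (f := fun i => (1 + |a' i|) / w i)
              (fun i hi => div_nonneg (by positivity) (hwpos i hi).le) hkS
          have h2 : 1 + |a' k| ≤ t * w k := (div_le_iff₀ hwk).1 h1
          have h3 : a' k ≤ |a' k| := le_abs_self _
          linarith
      · have hTsum : ∑ k ∈ T, c k • v k = u := by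
          rw [← Finset.sum_coe_sort T (fun k => c k • v k),
            ← Equiv.sum_comp e.symm (fun k : ↥T => c ↑k • v ↑k), hu]
          apply Finset.sum_congr rfl
          intro j _
          have hmem : ↑(e.symm j) ∈ T := (e.symm j).2
          simp only [hcdef, dif_pos hmem]
          congr 2
          · congr 1
            have : (⟨↑(e.symm j), hmem⟩ : ↥T) = e.symm j := Subtype.ext rfl
            rw [this, Equiv.apply_symm_apply]
        have hSsum2 : ∑ k ∈ S, c k • v k = -u := by
          have hck : ∀ k ∈ S, c k • v k = t • (w k • v k) - a' k • v k := by
            intro k hk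
            have hkT : k ∉ T := by rw [hmemT]; simp [hk]
            simp only [hcdef, dif_neg hkT, sub_smul, smul_smul]
          rw [Finset.sum_congr rfl hck, Finset.sum_sub_distrib, ← Finset.smul_sum,
            hSsum, smul_zero, zero_sub, neg_inj]
          rw [← Finset.sum_coe_sort S (fun k => a' k • v k), ← ha]
          apply Finset.sum_congr rfl
          intro k _
          simp only [ha'def, dif_pos k.2]
        have hfS : Finset.univ.filter (fun k : Fin m => k ∈ S) = S := by
          ext k; simp
        calc ∑ k, c k • v k
            = ∑ k ∈ Finset.univ.filter (fun k : Fin m => k ∈ S), c k • v k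
              + ∑ k ∈ Finset.univ.filter (fun k : Fin m => k ∉ S), c k • v k :=
              (Finset.sum_filter_add_sum_filter_not _ _ _).symm
          _ = -u + u := by rw [hfS, ← hTdef, hSsum2, hTsum]
          _ = 0 := by exact neg_add_cancel u
    obtain ⟨β', hβ'ne, hβ'⟩ := ih m' hm'lt ↥W v' h'
    refine ⟨(β' : E), by simpa using hβ'ne, ?_⟩
    intro k
    by_cases hk : k ∈ T
    · have hdiff : v k - (Submodule.orthogonalProjectionOnto W (v k) : E) ∈ Wᗮ :=
        by exact W.sub_starProjection_mem_orthogonal _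
      have h2 : ⟪(β' : E), v k - (Submodule.orthogonalProjectionOnto W (v k) : E)⟫ = 0 :=
        (Submodule.mem_orthogonal W _).1 hdiff _ β'.2
      have h3 : ⟪v k - (Submodule.orthogonalProjectionOnto W (v k) : E), (β' : E)⟫ = 0 := by
        rw [real_inner_comm]; exact h2
      have h4 : ⟪v k, (β' : E)⟫ = ⟪(Submodule.orthogonalProjectionOnto W (v k) : E), (β' : E)⟫ := by
        have := inner_sub_left (𝕜 := ℝ) (v k) ((Submodule.orthogonalProjectionOnto W (v k) : E)) (β' : E)
        rw [h3] at this
        linarith [this]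
      rw [h4]
      have h5 := hβ' (e ⟨k, hk⟩)
      have h6 : v' (e ⟨k, hk⟩) = Submodule.orthogonalProjectionOnto W (v k) := by
        rw [hv'def]
        simp only [Equiv.symm_apply_apply]
      rw [h6] at h5
      rw [Submodule.coe_inner] at h5
      exact h5
    · have hkS : k ∈ S := by
        by_contra hkS
        exact hk ((hmemT k).2 hkS)
      have hvV : v k ∈ V := Submodule.subset_span (Set.mem_image_of_mem v hkS)
      have : ⟪v k, (β' : E)⟫ = 0 := (Submodule.mem_orthogonal V _).1 β'.2 _ hvV
      exact this.symm.le
  · obtain ⟨f, u, hfu, hub⟩ :=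
      geometric_hahn_banach_point_closed (convex_convexHull ℝ _)
        ((Set.finite_range v).isClosed_convexHull (𝕜 := ℝ)) h0
    set β : E := (InnerProductSpace.toDual ℝ E).symm f with hβdef
    have hβ : ∀ x, ⟪β, x⟫ = f x := fun x => InnerProductSpace.toDual_symm_apply
    have hf0 : f 0 = 0 := map_zero f
    have hfv : ∀ k, 0 < f (v k) := by
      intro k
      have := hub (v k) (subset_convexHull ℝ _ (Set.mem_range_self k))
      linarith
    refine ⟨β, ?_, fun k => ?_⟩
    · intro hβ0
      have h1 := hβ (v ⟨0, hm⟩)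
      rw [hβ0, inner_zero_left] at h1
      exact absurd h1.symm (ne_of_gt (hfv _))
    · rw [real_inner_comm, hβ]
      exact (hfv k).le

/-- Separating-hyperplane direction of the abstract duality underlying Theorem 2. -/
theorem stmt13 {p m : ℕ} (hm : 1 ≤ m) (v : Fin m → EuclideanSpace ℝ (Fin p))
    (h : ¬ ∃ c : Fin m → ℝ, (∀ k, 1 ≤ c k) ∧ ∑ k, c k • v k = 0) :
    ∃ β : EuclideanSpace ℝ (Fin p), β ≠ 0 ∧ ∀ k, 0 ≤ ⟪v k, β⟫ :=
  aux_sep m (EuclideanSpace ℝ (Fin p)) v h
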